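/- For fixed a > 0, the function g(x) = (1 + a/x)^{x+a} is strictly decreasing on (0, ∞), and g(x) > e^a for all x > 0. -/

import Mathlib

theorem exp_approx_anti (a : ℝ) (ha : 0 < a) :
    StrictAntiOn (fun x : ℝ => (1 + a / x) ^ (x + a)) (Set.Ioi 0) ∧
      ∀ x : ℝ, 0 < x → Real.exp a < (1 + a / x) ^ (x + a) := by
  set f : ℝ → ℝ := fun x => (x + a) * (Real.log (x + a) - Real.log x) with hf
  -- g = exp ∘ f on Ioi 0
  have hg : ∀ x : ℝ, 0 < x → (1 + a / x) ^ (x + a) = Real.exp (f x) := by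
    intro x hx
    have hxa : 0 < x + a := by linarith
    have h1 : (1 : ℝ) + a / x = (x + a) / x := by field_simp
    rw [h1, Real.rpow_def_of_pos (by positivity),
      Real.log_div (by linarith) (ne_of_gt hx), hf]
    ring_nf
  -- derivative of f
  have hderiv : ∀ x : ℝ, 0 < x →
      HasDerivAt f (Real.log (x + a) - Real.log x - a / x) x := by
    intro x hx
    have hxa : 0 < x + a := by linarith
    have h1 : HasDerivAt (fun y : ℝ => y + a) 1 x := (hasDerivAt_id x).add_const a
    have h2 : HasDerivAt (fun y : ℝ => Real.log (y + a)) (1 / (x + a)) x :=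
      h1.log (ne_of_gt hxa)
    have h3 : HasDerivAt (fun y : ℝ => Real.log y) x⁻¹ x :=
      Real.hasDerivAt_log (ne_of_gt hx)
    have h4 := h1.mul (h2.sub h3)
    convert h4 using 1
    · rfl
    · rfl
    · rfl
    · simp only [Pi.sub_apply]
      field_simp
      ring
  -- derivative is negative
  have hneg : ∀ x : ℝ, 0 < x → Real.log (x + a) - Real.log x - a / x < 0 := by
    intro x hx
    have hxa : 0 < x + a := by linarith
    have hax : 0 < a / x := by positivity
    have h1 : Real.log (x + a) - Real.log x = Real.log (1 + a / x) := by
      rw [← Real.log_div (ne_of_gt hxa) (ne_of_gt hx)]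
      congr 1
      field_simp
    have h2 : (1 : ℝ) + a / x < Real.exp (a / x) := by
      have := Real.add_one_lt_exp (ne_of_gt hax)
      linarith
    have h3 : Real.log (1 + a / x) < a / x := by
      calc Real.log (1 + a / x) < Real.log (Real.exp (a / x)) :=
            Real.log_lt_log (by positivity) h2
        _ = a / x := Real.log_exp _
    linarith [h1 ▸ h3]
  -- f strictly anti on Ioi 0
  have hanti : StrictAntiOn f (Set.Ioi 0) := by
    apply strictAntiOn_of_deriv_neg (convex_Ioi 0)
    · intro x hx
      exact (hderiv x hx).differentiableAt.continuousAt.continuousWithinAt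
    · intro x hx
      rw [interior_Ioi] at hx
      rw [(hderiv x hx).deriv]
      exact hneg x hx
  constructor
  · intro x hx y hy hxy
    simp only
    rw [hg x hx, hg y hy]
    exact Real.exp_lt_exp.mpr (hanti hx hy hxy)
  · intro x hx
    rw [hg x hx]
    apply Real.exp_lt_exp.mpr
    -- need a < f x, i.e. log(x+a) - log x > a/(x+a)
    have hxa : 0 < x + a := by linarith
    have hu : x / (x + a) ≠ 1 := by
      intro h
      have : x = x + a := by
        field_simp at h
        linarith
      linarith
    have h1 : Real.log (x / (x + a)) < x / (x + a) - 1 :=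
      Real.log_lt_sub_one_of_pos (by positivity) hu
    have h2 : Real.log (x / (x + a)) = Real.log x - Real.log (x + a) :=
      Real.log_div (ne_of_gt hx) (ne_of_gt hxa)
    have h3 : x / (x + a) - 1 = -(a / (x + a)) := by field_simp; ring
    have h4 : a / (x + a) < Real.log (x + a) - Real.log x := by
      rw [h2, h3] at h1; linarith
    have h5 : a = (x + a) * (a / (x + a)) := by field_simp
    calc a = (x + a) * (a / (x + a)) := h5
      _ < f x := by
        apply mul_lt_mul_of_pos_left h4 hxa
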